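/- Let (D,d) be a noncomplete rectifiably connected metric space, let x₁ ∈ D, and let α be a rectifiable arc with one endpoint x₁ such that ℓ(α[x₁,y]) ≤ a·d(y) for all y ∈ α (an a-carrot arc) and such that α is contained in the closed ball B̄(x₁, d(x₁)/2). Then for every y ∈ α, the quasihyperbolic length satisfies ℓ_k(α[x₁,y]) ≤ 3a. -/

import Mathlib

open Set Metric ENNReal

noncomputable section

variable {X : Type*} [MetricSpace X] {Y : Type*} [MetricSpace Y]

/-- Distance from a point `z` to the boundary of `D`, modeled as the distance
to the complement of `D`. -/
def bdist (D : Set X) (z : X) : ℝ := Metric.infDist z Dᶜ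

/-- Distance from a set `A` to the boundary of `D`. -/
def setBdist (D A : Set X) : ℝ := sInf (bdist D '' A)

/-- Quasihyperbolic length (variation) of `f` over the parameter set `s`, the
discretized version of `∫_γ |dz| / dist(z, ∂D)`. -/
def qhVariationOn (D : Set X) (f : ℝ → X) (s : Set ℝ) : ℝ≥0∞ :=
  ⨆ p : ℕ × { u : ℕ → ℝ // Monotone u ∧ ∀ i, u i ∈ s },
    ∑ i ∈ Finset.range p.1,
      edist (f (p.2.1 (i + 1))) (f (p.2.1 i)) /
        max (ENNReal.ofReal (bdist D (f (p.2.1 i))))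
            (ENNReal.ofReal (bdist D (f (p.2.1 (i + 1)))))

/-- `f : [0,1] → D` is a curve in `D` from `x` to `y`. -/
structure IsCurveIn (D : Set X) (f : ℝ → X) (x y : X) : Prop where
  cont : ContinuousOn f (Icc 0 1)
  mem : ∀ t ∈ Icc (0 : ℝ) 1, f t ∈ D
  source : f 0 = x
  target : f 1 = y

/-- Every pair of points of `D` can be joined by a rectifiable curve in `D`. -/
def RectifiablyConnected (D : Set X) : Prop :=
  ∀ x ∈ D, ∀ y ∈ D, ∃ f : ℝ → X, IsCurveIn D f x y ∧ eVariationOn f (Icc 0 1) < ⊤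

/-- The quasihyperbolic distance in `D`. -/
def qhDist (D : Set X) (x y : X) : ℝ≥0∞ :=
  ⨅ (f : ℝ → X) (_ : IsCurveIn D f x y ∧ eVariationOn f (Icc 0 1) < ⊤),
    qhVariationOn D f (Icc 0 1)

/-- Diameter of a set `A ⊆ D` with respect to the quasihyperbolic metric of `D`. -/
def qhDiam (D : Set X) (A : Set X) : ℝ≥0∞ := ⨆ x ∈ A, ⨆ y ∈ A, qhDist D x y

/-- `D` is a length `a`-John space with center `x₀`: every point can be joined to `x₀`
by an `a`-carrot arc, i.e. `ℓ(α[x,z]) ≤ a · dist(z, ∂D)` for every `z` on the arc. -/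
def IsLengthJohn (D : Set X) (a : ℝ) (x₀ : X) : Prop :=
  ∀ x ∈ D, ∃ f : ℝ → X, IsCurveIn D f x x₀ ∧
    ∀ t ∈ Icc (0 : ℝ) 1, eVariationOn f (Icc 0 t) ≤ ENNReal.ofReal (a * bdist D (f t))

/-- `D` is locally `(lam, c)`-quasiconvex: any two points of `B(x, lam·dist(x,∂D))`
can be joined by a `c`-quasiconvex curve in `D`. -/
def LocQuasiconvex (D : Set X) (lam c : ℝ) : Prop :=
  ∀ x ∈ D, ∀ y ∈ D, ∀ z ∈ D,
    dist y x < lam * bdist D x → dist z x < lam * bdist D x →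
      ∃ f : ℝ → X, IsCurveIn D f y z ∧
        eVariationOn f (Icc 0 1) ≤ ENNReal.ofReal (c * dist y z)

/-- `η` is a quasisymmetry control function: an increasing self-homeomorphism of `[0, ∞)`. -/
structure QSControl (η : ℝ → ℝ) : Prop where
  mono : StrictMonoOn η (Ici 0)
  cont : ContinuousOn η (Ici 0)
  zero : η 0 = 0
  surj : ∀ s : ℝ, 0 ≤ s → ∃ t : ℝ, 0 ≤ t ∧ η t = s

/-- `f` is `η`-quasisymmetric on `D`. -/
def IsQSOn (f : X → Y) (D : Set X) (η : ℝ → ℝ) : Prop :=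
  ∀ x ∈ D, ∀ a ∈ D, ∀ b ∈ D, ∀ t : ℝ, 0 ≤ t →
    dist x a ≤ t * dist x b → dist (f x) (f a) ≤ η t * dist (f x) (f b)

/-- `f` is a homeomorphism from `D` onto `D'` with inverse `g`. -/
def IsHomeoOn (f : X → Y) (g : Y → X) (D : Set X) (D' : Set Y) : Prop :=
  ContinuousOn f D ∧ ContinuousOn g D' ∧ MapsTo f D D' ∧ MapsTo g D' D ∧ InvOn g f D D'

end
/-- If `α` is an `a`-carrot arc starting from `x₁` contained in the closed
ball `B̄(x₁, d(x₁)/2)`, then `ℓ_k(α[x₁,y]) ≤ 3a` for every `y ∈ α`. -/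
theorem qhLength_le_of_carrot_in_ball
    {X : Type*} [MetricSpace X] (D : Set X) (hDo : IsOpen D) (hbd : Dᶜ.Nonempty)
    (hrc : RectifiablyConnected D) (a : ℝ) (ha : 1 ≤ a)
    (x₁ : X) (hx₁ : x₁ ∈ D) (f : ℝ → X)
    (hcont : ContinuousOn f (Icc 0 1)) (hmem : ∀ t ∈ Icc (0 : ℝ) 1, f t ∈ D)
    (h0 : f 0 = x₁)
    (hcarrot : ∀ t ∈ Icc (0 : ℝ) 1,
      eVariationOn f (Icc 0 t) ≤ ENNReal.ofReal (a * bdist D (f t)))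
    (hball : ∀ t ∈ Icc (0 : ℝ) 1, dist (f t) x₁ ≤ bdist D x₁ / 2) :
    ∀ t ∈ Icc (0 : ℝ) 1, qhVariationOn D f (Icc 0 t) ≤ ENNReal.ofReal (3 * a) := by
  intro t ht
  have hd₁ : 0 < bdist D x₁ := by
    rw [bdist, ← hDo.isClosed_compl.notMem_iff_infDist_pos hbd]
    simpa using hx₁
  have hlow : ∀ s ∈ Icc (0:ℝ) 1, bdist D x₁ / 2 ≤ bdist D (f s) := by
    intro s hs
    have h1 : Metric.infDist x₁ Dᶜ ≤ Metric.infDist (f s) Dᶜ + dist x₁ (f s) :=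
      Metric.infDist_le_infDist_add_dist
    have h2 := hball s hs
    rw [dist_comm] at h1
    simp only [bdist] at *
    linarith
  have hup : bdist D (f t) ≤ 3 / 2 * bdist D x₁ := by
    have h1 : Metric.infDist (f t) Dᶜ ≤ Metric.infDist x₁ Dᶜ + dist (f t) x₁ :=
      Metric.infDist_le_infDist_add_dist
    have h2 := hball t ht
    simp only [bdist] at *
    linarith
  have hsub : Icc (0:ℝ) t ⊆ Icc 0 1 := Icc_subset_Icc le_rfl ht.2
  rw [qhVariationOn]
  apply iSup_le
  rintro ⟨n, u, hu, hus⟩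
  calc ∑ i ∈ Finset.range n,
        edist (f (u (i + 1))) (f (u i)) /
          max (ENNReal.ofReal (bdist D (f (u i))))
              (ENNReal.ofReal (bdist D (f (u (i + 1)))))
      ≤ ∑ i ∈ Finset.range n,
        edist (f (u (i + 1))) (f (u i)) / ENNReal.ofReal (bdist D x₁ / 2) := by
        refine Finset.sum_le_sum fun i _ => ?_
        refine ENNReal.div_le_div_left ?_ _
        exact le_max_of_le_left (ENNReal.ofReal_le_ofReal (hlow (u i) (hsub (hus i))))
    _ = (∑ i ∈ Finset.range n, edist (f (u (i + 1))) (f (u i))) /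
          ENNReal.ofReal (bdist D x₁ / 2) := by simp [div_eq_mul_inv, ← Finset.sum_mul]
    _ ≤ eVariationOn f (Icc 0 t) / ENNReal.ofReal (bdist D x₁ / 2) :=
        ENNReal.div_le_div_right (eVariationOn.sum_le (f := f) (n := n) hu hus) _
    _ ≤ ENNReal.ofReal (a * bdist D (f t)) / ENNReal.ofReal (bdist D x₁ / 2) :=
        ENNReal.div_le_div_right (hcarrot t ht) _
    _ ≤ ENNReal.ofReal (3 * a) := by
        rw [← ENNReal.ofReal_div_of_pos (by linarith)]
        apply ENNReal.ofReal_le_ofReal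
        rw [div_le_iff₀ (by linarith)]
        nlinarith
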